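/- arXiv:1401.5866 — 3 statements merged into one kernel-verified Lean document; each statement's English description precedes it below -/
import Mathlib

section
/- (Hurwitz's theorem for formal Laurent series.) For every f ∈ K ∖ 𝔽_q(t), there exist infinitely many rational functions P/Q with P, Q ∈ 𝔽_q[t], Q ≠ 0, such that |f − P/Q| < 1/|Q|². -/
/-!
Setting: `q` a prime power is formalized as `q = Fintype.card Fq` for a finite field `Fq`.
The field `K = 𝔽_q((t⁻¹))` of formal Laurent series in `t⁻¹` is realized as
`LaurentSeries Fq = 𝔽_q((X))` with `X = t⁻¹` (so `deg f = -(X-adic order of f)`).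
-/

open scoped Classical
open MeasureTheory Filter
open scoped ENNReal

noncomputable section

variable (Fq : Type) [Field Fq] [Fintype Fq]

/-- `t ∈ K = 𝔽_q((t⁻¹))`, realized as the inverse of the variable `X` of
`LaurentSeries Fq`. -/
def tvar : LaurentSeries Fq := (HahnSeries.single (1 : ℤ) (1 : Fq))⁻¹

/-- The degree `deg f ∈ ℤ ∪ {-∞}` of `f ∈ K`, with `deg 0 = ⊥ = -∞`. -/
def fdeg (f : LaurentSeries Fq) : WithBot ℤ :=
  if f = 0 then ⊥ else ((-f.order : ℤ) : WithBot ℤ)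

/-- The absolute value `|f| = q^(deg f)`, with `|0| = 0`. -/
def fabs (f : LaurentSeries Fq) : ℝ :=
  if f = 0 then 0 else (Fintype.card Fq : ℝ) ^ (-f.order)

/-- Keep only the part of `f` with `X`-exponents `≤ N`, i.e. `t`-exponents `≥ -N`. -/
def cutoff (N : ℤ) (f : LaurentSeries Fq) : LaurentSeries Fq where
  coeff j := if j ≤ N then f.coeff j else 0
  isPWO_support' := f.isPWO_support'.mono (by
    intro j hj
    by_cases hN : j ≤ N
    · simpa [Function.mem_support, hN] using hj
    · simp [Function.mem_support, hN] at hj)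

/-- The polynomial part `[f] ∈ 𝔽_q[t]` of `f` (the part with `t`-exponents `≥ 0`). -/
def polyPart (f : LaurentSeries Fq) : LaurentSeries Fq := cutoff Fq 0 f

/-- The fractional part `{f} = f - [f]`. -/
def fracPart (f : LaurentSeries Fq) : LaurentSeries Fq := f - polyPart Fq f

/-- `𝒪 = {f ∈ K : |f| ≤ 1}`. -/
def setO : Set (LaurentSeries Fq) := {f | fabs Fq f ≤ 1}

/-- `𝕃 = {f ∈ K : |f| < 1}`. -/
def setL : Set (LaurentSeries Fq) := {f | fabs Fq f < 1}

/-- `𝕁₀ = {f ∈ 𝒪 : deg f = 0}`. -/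
def setJ0 : Set (LaurentSeries Fq) := {f | fdeg Fq f = ((0 : ℤ) : WithBot ℤ)}

/-- The embedding `𝔽_q[t] → K`, sending a polynomial `P` to `P(t)`. -/
def polyT (P : Polynomial Fq) : LaurentSeries Fq := Polynomial.aeval (tvar Fq) P

/-- The subfield `𝔽_q(t) ⊆ K` of rational functions (as a subset). -/
def ratSet : Set (LaurentSeries Fq) :=
  {g | ∃ P Q : Polynomial Fq, Q ≠ 0 ∧ g = polyT Fq P / polyT Fq Q}

/-- The Artin map `Ψ(f) = {1/f}`. -/
def artin (f : LaurentSeries Fq) : LaurentSeries Fq := fracPart Fq f⁻¹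

/-- The partial quotients `A_n = [1/Ψ^{n-1}(f)]` (`n ≥ 1`). -/
def pquot (f : LaurentSeries Fq) (n : ℕ) : LaurentSeries Fq :=
  polyPart Fq (((artin Fq)^[n - 1] f)⁻¹)

/-- `convPQ f (k+1) = (P_k, Q_k)`, the principal convergents;
`convPQ f 0 = (P_{-1}, Q_{-1}) = (1, 0)`, `convPQ f 1 = (P_0, Q_0) = (0, 1)`. -/
def convPQ (f : LaurentSeries Fq) : ℕ → LaurentSeries Fq × LaurentSeries Fq
  | 0 => (1, 0)
  | 1 => (0, 1)
  | (n + 2) => (pquot Fq f (n + 1) * (convPQ f (n + 1)).1 + (convPQ f n).1,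
                pquot Fq f (n + 1) * (convPQ f (n + 1)).2 + (convPQ f n).2)

/-- `Pc f (k+1) = P_k`. -/
def Pc (f : LaurentSeries Fq) (n : ℕ) : LaurentSeries Fq := (convPQ Fq f n).1

/-- `Qc f (k+1) = Q_k`. -/
def Qc (f : LaurentSeries Fq) (n : ℕ) : LaurentSeries Fq := (convPQ Fq f n).2

/-- The geometric Farey map `F` on `𝕃 × ℤ`. -/
def fareyGeom (p : LaurentSeries Fq × ℤ) : LaurentSeries Fq × ℤ :=
  if fdeg Fq p.1 < ((-1 : ℤ) : WithBot ℤ) ∨ p.2 < 0 then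
    (fracPart Fq (tvar Fq * p.1), p.2 + 1)
  else
    (fracPart Fq ((tvar Fq * p.1)⁻¹), -(p.2 + 1))

/-- The algebraic Farey map `F_h` associated to `h`. -/
def fareyAlg (h : LaurentSeries Fq) (f : LaurentSeries Fq) : LaurentSeries Fq :=
  if fdeg Fq f = ((0 : ℤ) : WithBot ℤ) then
    (1 - polyPart Fq ((1 - h) * f⁻¹) * f) / f
  else
    f / (1 - polyPart Fq ((1 - h) * f⁻¹) * f)

/-- The matrix `M(f, n)` associated to the geometric Farey map. -/
def geomMat (p : LaurentSeries Fq × ℤ) : Matrix (Fin 2) (Fin 2) (LaurentSeries Fq) :=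
  if p.2 < 0 then
    !![(tvar Fq)⁻¹, (tvar Fq)⁻¹ * polyPart Fq (tvar Fq * p.1); 0, 1]
  else if fdeg Fq p.1 = ((-1 : ℤ) : WithBot ℤ) then
    !![0, 1; tvar Fq, tvar Fq * polyPart Fq ((tvar Fq * p.1)⁻¹)]
  else
    !![1, 0; 0, tvar Fq]

/-- The matrix `M_h(f)` associated to the algebraic Farey map `F_h`. -/
def algMat (h : LaurentSeries Fq) (f : LaurentSeries Fq) :
    Matrix (Fin 2) (Fin 2) (LaurentSeries Fq) :=
  if fdeg Fq f = ((0 : ℤ) : WithBot ℤ) then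
    !![0, 1; 1, polyPart Fq ((1 - h) * f⁻¹)]
  else
    !![1, 0; polyPart Fq ((1 - h) * f⁻¹), 1]

/-- The leading term `LT(f)` of `f`. -/
def leadTerm (f : LaurentSeries Fq) : LaurentSeries Fq :=
  HahnSeries.single f.order (f.coeff f.order)

/-- `G(f) = 1/f - 1/LT(f)`. -/
def Gmap (f : LaurentSeries Fq) : LaurentSeries Fq := f⁻¹ - (leadTerm Fq f)⁻¹

/-- The Farey map `F_𝕁` of Berthé–Nakada–Natsui. -/
def fareyBNN (f : LaurentSeries Fq) : LaurentSeries Fq :=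
  if ((0 : ℤ) : WithBot ℤ) ≤ fdeg Fq (Gmap Fq f) then (Gmap Fq f)⁻¹
  else f⁻¹ - polyPart Fq f⁻¹

/-- The Borel measurable structure on `K`, for the valued-field topology. -/
instance : MeasurableSpace (LaurentSeries Fq) := borel _
instance : BorelSpace (LaurentSeries Fq) := ⟨rfl⟩

lemma tvar_eq : tvar Fq = HahnSeries.single (-1 : ℤ) (1 : Fq) := by
  refine inv_eq_of_mul_eq_one_right ?_
  rw [HahnSeries.single_mul_single]
  simp [HahnSeries.single_zero_one]

lemma tvar_pow (m : ℕ) : tvar Fq ^ m = HahnSeries.single (-(m : ℤ)) (1 : Fq) := by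
  rw [tvar_eq, HahnSeries.single_pow, one_pow]
  norm_num

lemma coeff_sum (j : ℤ) (s : Finset ℕ) (F : ℕ → LaurentSeries Fq) :
    (∑ i ∈ s, F i).coeff j = ∑ i ∈ s, (F i).coeff j :=
  map_sum (HahnSeries.coeff.addMonoidHom j) F s

lemma polyT_coeff (P : Polynomial Fq) (j : ℤ) :
    (polyT Fq P).coeff j = if j ≤ 0 then P.coeff (-j).toNat else 0 := by
  rw [polyT, Polynomial.aeval_def, Polynomial.eval₂_eq_sum_range, coeff_sum]
  have hterm : ∀ i ∈ Finset.range (P.natDegree + 1),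
      (algebraMap Fq (LaurentSeries Fq) (P.coeff i) * tvar Fq ^ i).coeff j
        = if -(i : ℤ) = j then P.coeff i else 0 := by
    intro i _
    rw [HahnSeries.algebraMap_apply',
      show algebraMap Fq (PowerSeries Fq) = (PowerSeries.C : Fq →+* PowerSeries Fq) from rfl,
      HahnSeries.ofPowerSeries_C, HahnSeries.C_apply, tvar_pow,
      HahnSeries.single_mul_single, HahnSeries.coeff_single]
    simp only [Algebra.algebraMap_self, RingHom.id_apply, zero_add, mul_one]
    split <;> split <;> simp_all <;> omega
  rw [Finset.sum_congr rfl hterm]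
  by_cases hj : j ≤ 0
  · simp only [if_pos hj]
    by_cases hd : (-j).toNat < P.natDegree + 1
    · rw [Finset.sum_eq_single ((-j).toNat)]
      · rw [if_pos (by omega)]
      · intro b _ hb
        rw [if_neg (by omega)]
      · intro h; exact absurd (Finset.mem_range.2 hd) h
    · rw [Finset.sum_eq_zero, Polynomial.coeff_eq_zero_of_natDegree_lt (by omega)]
      intro b hb
      rw [if_neg (by simp only [Finset.mem_range] at hb; omega)]
  · rw [if_neg hj, Finset.sum_eq_zero]
    intro b hb
    rw [if_neg (by omega)]



lemma one_lt_q : (1 : ℝ) < Fintype.card Fq := by exact_mod_cast Fintype.one_lt_card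

lemma q_pos : (0 : ℝ) < Fintype.card Fq := lt_trans one_pos (one_lt_q Fq)

lemma fabs_nonneg (f : LaurentSeries Fq) : 0 ≤ fabs Fq f := by
  rw [fabs]; split
  · exact le_rfl
  · positivity

lemma fabs_pos {f : LaurentSeries Fq} (hf : f ≠ 0) : 0 < fabs Fq f := by
  rw [fabs, if_neg hf]; positivity

lemma fabs_mul (x y : LaurentSeries Fq) : fabs Fq (x * y) = fabs Fq x * fabs Fq y := by
  by_cases hx : x = 0
  · simp [fabs, hx]
  by_cases hy : y = 0
  · simp [fabs, hy]
  rw [fabs, fabs, fabs, if_neg (mul_ne_zero hx hy), if_neg hx, if_neg hy,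
    HahnSeries.order_mul hx hy, neg_add, zpow_add₀ (ne_of_gt (q_pos Fq))]

lemma fabs_one : fabs Fq (1 : LaurentSeries Fq) = 1 := by
  rw [fabs, if_neg one_ne_zero, HahnSeries.order_one]
  simp

lemma fabs_inv (x : LaurentSeries Fq) : fabs Fq x⁻¹ = (fabs Fq x)⁻¹ := by
  by_cases hx : x = 0
  · simp [fabs, hx]
  have h := fabs_mul Fq x⁻¹ x
  rw [inv_mul_cancel₀ hx, fabs_one] at h
  exact eq_inv_of_mul_eq_one_left h.symm

lemma fabs_div (x y : LaurentSeries Fq) : fabs Fq (x / y) = fabs Fq x / fabs Fq y := by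
  rw [div_eq_mul_inv, fabs_mul, fabs_inv, div_eq_mul_inv]

lemma fabs_le_zpow {f : LaurentSeries Fq} (n : ℤ) (hc : ∀ j : ℤ, j < n → f.coeff j = 0) :
    fabs Fq f ≤ (Fintype.card Fq : ℝ) ^ (-n) := by
  by_cases hf : f = 0
  · rw [fabs, if_pos hf]; positivity
  rw [fabs, if_neg hf]
  have horder : n ≤ f.order := by
    by_contra h
    push_neg at h
    exact hf (HahnSeries.coeff_order_eq_zero.1 (hc _ h))
  exact zpow_le_zpow_right₀ (le_of_lt (one_lt_q Fq)) (neg_le_neg horder)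

lemma polyT_ne_zero {Q : Polynomial Fq} (hQ : Q ≠ 0) : polyT Fq Q ≠ 0 := by
  intro h
  apply Polynomial.leadingCoeff_ne_zero.2 hQ
  have := polyT_coeff Fq Q (-(Q.natDegree : ℤ))
  rw [h, HahnSeries.coeff_zero, if_pos (by omega)] at this
  rw [Polynomial.leadingCoeff]
  convert this.symm
  omega

lemma fabs_polyT_le {Q : Polynomial Fq} (n : ℕ) (hdeg : Q.natDegree ≤ n) :
    fabs Fq (polyT Fq Q) ≤ (Fintype.card Fq : ℝ) ^ (n : ℤ) := by
  have := fabs_le_zpow Fq (f := polyT Fq Q) (-(n : ℤ)) (fun j hj => by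
    rw [polyT_coeff]
    rcases le_or_gt j 0 with h | h
    · rw [if_pos h]
      exact Polynomial.coeff_eq_zero_of_natDegree_lt (by omega)
    · rw [if_neg (not_le.2 h)])
  rwa [neg_neg] at this

lemma one_le_fabs_polyT {Q : Polynomial Fq} (hQ : Q ≠ 0) : 1 ≤ fabs Fq (polyT Fq Q) := by
  have hne := polyT_ne_zero Fq hQ
  rw [fabs, if_neg hne]
  have horder : (polyT Fq Q).order ≤ 0 := by
    by_contra h
    push_neg at h
    refine hne (HahnSeries.coeff_order_eq_zero.1 ?_)
    rw [polyT_coeff, if_neg (not_le.2 h)]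
  calc (1 : ℝ) = (Fintype.card Fq : ℝ) ^ (0 : ℤ) := by simp
  _ ≤ _ := zpow_le_zpow_right₀ (le_of_lt (one_lt_q Fq)) (by omega)



def Qp (n : ℕ) (c : Fin (n + 1) → Fq) : Polynomial Fq :=
  ∑ i : Fin (n + 1), Polynomial.C (c i) * Polynomial.X ^ (i : ℕ)

lemma Qp_coeff (n : ℕ) (c : Fin (n + 1) → Fq) (k : ℕ) :
    (Qp Fq n c).coeff k = if h : k < n + 1 then c ⟨k, h⟩ else 0 := by
  rw [Qp, Polynomial.finset_sum_coeff]
  by_cases h : k < n + 1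
  · rw [dif_pos h, Finset.sum_eq_single (⟨k, h⟩ : Fin (n + 1))]
    · simp [Polynomial.coeff_X_pow]
    · intro b _ hb
      have hbk : (b : ℕ) ≠ k := fun hh => hb (Fin.ext hh)
      simp [Polynomial.coeff_X_pow, Ne.symm hbk]
    · intro hn; exact absurd (Finset.mem_univ _) hn
  · rw [dif_neg h, Finset.sum_eq_zero]
    intro b _
    have hbk : (b : ℕ) ≠ k := by omega
    simp [Polynomial.coeff_X_pow, Ne.symm hbk]

lemma Qp_natDegree_le (n : ℕ) (c : Fin (n + 1) → Fq) : (Qp Fq n c).natDegree ≤ n := by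
  rw [Polynomial.natDegree_le_iff_coeff_eq_zero]
  intro N hN
  rw [Qp_coeff, dif_neg (by omega)]

lemma dirichlet (f : LaurentSeries Fq) (n : ℕ) :
    ∃ Q : Polynomial Fq, Q ≠ 0 ∧ Q.natDegree ≤ n ∧
      ∀ j : ℤ, 0 < j → j ≤ (n : ℤ) → (f * polyT Fq Q).coeff j = 0 := by
  obtain ⟨c, c', hne, heq⟩ := Fintype.exists_ne_map_eq_of_card_lt
    (fun c : Fin (n + 1) → Fq =>
      fun j : Fin n => (f * polyT Fq (Qp Fq n c)).coeff ((j : ℤ) + 1))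
    (by
      rw [Fintype.card_fun, Fintype.card_fun, Fintype.card_fin, Fintype.card_fin]
      exact Nat.pow_lt_pow_right Fintype.one_lt_card (Nat.lt_succ_self n))
  refine ⟨Qp Fq n c - Qp Fq n c', ?_, ?_, ?_⟩
  · rw [sub_ne_zero]
    intro hQ
    apply hne
    funext i
    have := congrArg (fun Q => Polynomial.coeff Q (i : ℕ)) hQ
    simpa [Qp_coeff, i.isLt] using this
  · exact le_trans (Polynomial.natDegree_sub_le _ _) (by
      simp [Qp_natDegree_le])
  · intro j hj0 hjn
    have hm : (j - 1).toNat < n := by omega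
    have hj' : ((⟨(j - 1).toNat, hm⟩ : Fin n) : ℤ) + 1 = j := by
      simp; omega
    have h2 := congrFun heq ⟨(j - 1).toNat, hm⟩
    simp only at h2
    rw [hj'] at h2
    have hsub : polyT Fq (Qp Fq n c - Qp Fq n c')
        = polyT Fq (Qp Fq n c) - polyT Fq (Qp Fq n c') := map_sub _ _ _
    rw [hsub, mul_sub, HahnSeries.coeff_sub, h2, sub_self]

lemma cutoff_coeff (N : ℤ) (h : LaurentSeries Fq) (j : ℤ) :
    (cutoff Fq N h).coeff j = if j ≤ N then h.coeff j else 0 := rfl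

lemma cutoff_support_finite (h : LaurentSeries Fq) : ((cutoff Fq 0 h).support).Finite := by
  set s := (cutoff Fq 0 h).support with hs
  rcases s.eq_empty_or_nonempty with he | hne
  · simp [he]
  have hwf : s.IsWF := (cutoff Fq 0 h).isPWO_support.isWF
  have hsub : s ⊆ Set.Icc (hwf.min hne) 0 := by
    intro a ha
    refine ⟨hwf.min_le hne ha, ?_⟩
    by_contra hlt
    push_neg at hlt
    apply ha
    show (cutoff Fq 0 h).coeff a = 0
    rw [cutoff_coeff, if_neg (by omega)]
  exact (Set.finite_Icc _ _).subset hsub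

lemma exists_polyT_cutoff (h : LaurentSeries Fq) :
    ∃ P : Polynomial Fq, ∀ j : ℤ, j ≤ 0 → (polyT Fq P).coeff j = h.coeff j := by
  have hfin := cutoff_support_finite Fq h
  have hble : ∀ b ∈ hfin.toFinset, b ≤ 0 := by
    intro b hb
    have hmem := (Set.Finite.mem_toFinset hfin).1 hb
    by_contra hpos
    push_neg at hpos
    apply hmem
    show (cutoff Fq 0 h).coeff b = 0
    rw [cutoff_coeff, if_neg (by omega)]
  refine ⟨∑ j ∈ hfin.toFinset, Polynomial.C (h.coeff j) * Polynomial.X ^ (-j).toNat, ?_⟩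
  intro j0 hj0
  rw [polyT_coeff, if_pos hj0, Polynomial.finset_sum_coeff]
  by_cases hmem : j0 ∈ hfin.toFinset
  · rw [Finset.sum_eq_single j0]
    · simp [Polynomial.coeff_X_pow]
    · intro b hb hbne
      have hb0 : b ≤ 0 := hble b hb
      have : (-j0).toNat ≠ (-b).toNat := by omega
      simp [Polynomial.coeff_X_pow, this]
    · intro hnot; exact absurd hmem hnot
  · rw [Finset.sum_eq_zero, eq_comm]
    · have : (cutoff Fq 0 h).coeff j0 = 0 := by
        by_contra hc
        exact hmem ((Set.Finite.mem_toFinset hfin).2 hc)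
      rwa [cutoff_coeff, if_pos hj0] at this
    · intro b hb
      have hb0 : b ≤ 0 := hble b hb
      have hbne : b ≠ j0 := fun hh => hmem (hh ▸ hb)
      have : (-j0).toNat ≠ (-b).toNat := by omega
      simp [Polynomial.coeff_X_pow, this]


lemma main_step (f : LaurentSeries Fq) (hfirr : f ∉ ratSet Fq) (n : ℕ) :
    ∃ g : LaurentSeries Fq, (∃ P Q : Polynomial Fq, Q ≠ 0 ∧ g = polyT Fq P / polyT Fq Q ∧
      fabs Fq (f - g) < 1 / (fabs Fq (polyT Fq Q)) ^ 2) ∧ g ∈ ratSet Fq ∧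
      fabs Fq (f - g) ≤ (Fintype.card Fq : ℝ) ^ (-((n : ℤ) + 1)) := by
  obtain ⟨Q, hQ, hdeg, hvan⟩ := dirichlet Fq f n
  obtain ⟨P, hP⟩ := exists_polyT_cutoff Fq (f * polyT Fq Q)
  set Q' := polyT Fq Q with hQ'def
  have hQ' : Q' ≠ 0 := polyT_ne_zero Fq hQ
  set g := polyT Fq P / Q' with hgdef
  have hgrat : g ∈ ratSet Fq := ⟨P, Q, hQ, rfl⟩
  have hsub : f - g = (f * Q' - polyT Fq P) / Q' := by
    rw [hgdef]
    field_simp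
  have hh : f * Q' - polyT Fq P ≠ 0 := by
    intro h0
    apply hfirr
    refine ⟨P, Q, hQ, ?_⟩
    rw [eq_div_iff hQ']
    exact sub_eq_zero.1 h0
  have hcoeff : ∀ j : ℤ, j < (n : ℤ) + 1 → (f * Q' - polyT Fq P).coeff j = 0 := by
    intro j hj
    rw [HahnSeries.coeff_sub]
    rcases le_or_gt j 0 with h0 | h0
    · rw [hP j h0, sub_self]
    · rw [polyT_coeff, if_neg (not_le.2 h0), hvan j h0 (by omega), sub_zero]
  have habs : fabs Fq (f * Q' - polyT Fq P) ≤ (Fintype.card Fq : ℝ) ^ (-((n : ℤ) + 1)) :=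
    fabs_le_zpow Fq ((n : ℤ) + 1) hcoeff
  have hQle : fabs Fq Q' ≤ (Fintype.card Fq : ℝ) ^ (n : ℤ) := fabs_polyT_le Fq n hdeg
  have hQge : 1 ≤ fabs Fq Q' := one_le_fabs_polyT Fq hQ
  have hQpos : 0 < fabs Fq Q' := lt_of_lt_of_le one_pos hQge
  have habs2 : fabs Fq (f - g) = fabs Fq (f * Q' - polyT Fq P) / fabs Fq Q' := by
    rw [hsub, fabs_div]
  have hbound1 : fabs Fq (f - g) ≤ (Fintype.card Fq : ℝ) ^ (-((n : ℤ) + 1)) := by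
    rw [habs2]
    exact le_trans (div_le_self (fabs_nonneg Fq _) hQge) habs
  have hbound2 : fabs Fq (f - g) < 1 / (fabs Fq Q') ^ 2 := by
    rw [habs2, div_lt_div_iff₀ hQpos (by positivity)]
    have hmul : fabs Fq (f * Q' - polyT Fq P) * fabs Fq Q'
        ≤ (Fintype.card Fq : ℝ) ^ (-((n : ℤ) + 1)) * (Fintype.card Fq : ℝ) ^ (n : ℤ) :=
      mul_le_mul habs hQle (le_of_lt hQpos) (by positivity)
    have hlt1 : (Fintype.card Fq : ℝ) ^ (-((n : ℤ) + 1)) * (Fintype.card Fq : ℝ) ^ (n : ℤ)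
        < 1 := by
      rw [← zpow_add₀ (ne_of_gt (q_pos Fq))]
      have : -((n : ℤ) + 1) + (n : ℤ) = -1 := by ring
      rw [this, zpow_neg_one]
      rw [inv_lt_one_iff₀]
      right
      exact one_lt_q Fq
    calc fabs Fq (f * Q' - polyT Fq P) * fabs Fq Q' ^ 2
        = (fabs Fq (f * Q' - polyT Fq P) * fabs Fq Q') * fabs Fq Q' := by ring
      _ < 1 * fabs Fq Q' :=
          mul_lt_mul_of_pos_right (lt_of_le_of_lt hmul hlt1) hQpos
      _ = 1 * fabs Fq Q' := rfl
  exact ⟨g, ⟨P, Q, hQ, rfl, hbound2⟩, hgrat, hbound1⟩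


/-- Hurwitz's theorem for formal Laurent series. For every
`f ∈ K ∖ 𝔽_q(t)` there are infinitely many rational functions `P/Q` with
`|f - P/Q| < 1/|Q|²`. -/
theorem hurwitz_laurent (f : LaurentSeries Fq) (hfirr : f ∉ ratSet Fq) :
    {g : LaurentSeries Fq | ∃ P Q : Polynomial Fq, Q ≠ 0 ∧ g = polyT Fq P / polyT Fq Q ∧
      fabs Fq (f - g) < 1 / (fabs Fq (polyT Fq Q)) ^ 2}.Infinite := by
  set S := {g : LaurentSeries Fq | ∃ P Q : Polynomial Fq, Q ≠ 0 ∧ g = polyT Fq P / polyT Fq Q ∧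
      fabs Fq (f - g) < 1 / (fabs Fq (polyT Fq Q)) ^ 2} with hS
  have hpos : ∀ g ∈ S, 0 < fabs Fq (f - g) := by
    intro g hg
    obtain ⟨P, Q, hQ, hg', _⟩ := hg
    refine fabs_pos Fq (sub_ne_zero.2 ?_)
    intro hfg
    exact hfirr ⟨P, Q, hQ, hfg ▸ hg'⟩
  by_contra hinf
  rw [Set.not_infinite] at hinf
  obtain ⟨g₀, hg₀, _, _⟩ := main_step Fq f hfirr 0
  obtain ⟨b, hbS, hbmin⟩ := Set.exists_min_image S (fun g => fabs Fq (f - g)) hinf ⟨g₀, hg₀⟩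
  have hm : 0 < fabs Fq (f - b) := hpos b hbS
  obtain ⟨n, hn⟩ := exists_pow_lt_of_lt_one hm
    (inv_lt_one_of_one_lt₀ (one_lt_q Fq))
  obtain ⟨g, hgS, _, hgle⟩ := main_step Fq f hfirr n
  have h1 : ((Fintype.card Fq : ℝ)⁻¹) ^ n = (Fintype.card Fq : ℝ) ^ (-(n : ℤ)) := by
    rw [zpow_neg, inv_pow, zpow_natCast]
  have h2 : (Fintype.card Fq : ℝ) ^ (-((n : ℤ) + 1)) ≤ (Fintype.card Fq : ℝ) ^ (-(n : ℤ)) :=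
    zpow_le_zpow_right₀ (le_of_lt (one_lt_q Fq)) (by omega)
  have := hbmin g hgS
  have hcontra : fabs Fq (f - g) < fabs Fq (f - b) := by
    calc fabs Fq (f - g) ≤ (Fintype.card Fq : ℝ) ^ (-((n : ℤ) + 1)) := hgle
      _ ≤ (Fintype.card Fq : ℝ) ^ (-(n : ℤ)) := h2
      _ = ((Fintype.card Fq : ℝ)⁻¹) ^ n := h1.symm
      _ < fabs Fq (f - b) := hn
  exact absurd this (not_le.2 hcontra)

end
end

section
/- Let h ∈ 𝕃 with deg h = −1. For every nonzero f ∈ 𝕃 with deg f = −m (m ≥ 1) such that the Artin map Ψ(f) = {1/f} is defined (f ∉ 𝔽_q(t) suffices), the algebraic Farey map satisfies F_h^{m+1}(f) = Ψ(f); that is, the Artin map is the acceleration of F_h by time −deg(f) + 1. -/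
/-!
Setting: `q` a prime power is formalized as `q = Fintype.card Fq` for a finite field `Fq`.
The field `K = 𝔽_q((t⁻¹))` of formal Laurent series in `t⁻¹` is realized as
`LaurentSeries Fq = 𝔽_q((X))` with `X = t⁻¹` (so `deg f = -(X-adic order of f)`).
-/

open scoped Classical
open MeasureTheory Filter
open scoped ENNReal

noncomputable section

variable (Fq : Type) [Field Fq] [Fintype Fq]

/-! ### Auxiliary lemmas -/

lemma polyPart_coeff (f : LaurentSeries Fq) (j : ℤ) :
    (polyPart Fq f).coeff j = if j ≤ 0 then f.coeff j else 0 := rfl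

lemma fracPart_coeff (f : LaurentSeries Fq) (j : ℤ) :
    (fracPart Fq f).coeff j = if j ≤ 0 then 0 else f.coeff j := by
  rw [fracPart, HahnSeries.coeff_sub, polyPart_coeff]
  split <;> simp

/-- The basic step map in the coordinate `u = 1/f`. -/
def Tmap (h u : LaurentSeries Fq) : LaurentSeries Fq :=
  u - polyPart Fq ((1 - h) * u)

lemma Tmap_eq (h u : LaurentSeries Fq) :
    Tmap Fq h u = fracPart Fq u + polyPart Fq (h * u) := by
  apply HahnSeries.coeff_injective; funext j
  have h1 : (1 - h) * u = u - h * u := by ring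
  rw [Tmap, HahnSeries.coeff_sub, polyPart_coeff, h1, HahnSeries.coeff_sub,
    HahnSeries.coeff_add, fracPart_coeff, polyPart_coeff]
  split <;> ring

lemma fracPart_Tmap (h u : LaurentSeries Fq) :
    fracPart Fq (Tmap Fq h u) = fracPart Fq u := by
  apply HahnSeries.coeff_injective; funext j
  rw [fracPart_coeff, fracPart_coeff]
  split
  · rfl
  · rw [Tmap_eq, HahnSeries.coeff_add, fracPart_coeff, polyPart_coeff]
    split
    · omega
    · simp

lemma fracPart_Tmap_iterate (h u : LaurentSeries Fq) (k : ℕ) :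
    fracPart Fq ((Tmap Fq h)^[k] u) = fracPart Fq u := by
  induction k with
  | zero => rfl
  | succ n ih => rw [Function.iterate_succ_apply', fracPart_Tmap, ih]

section Main

variable {Fq}
variable {h : LaurentSeries Fq} (hne : h ≠ 0) (hor : h.order = 1)

include hne hor in
lemma Tmap_coeff_of_le (u : LaurentSeries Fq) (j : ℤ) (hj : j ≤ 0) :
    (Tmap Fq h u).coeff j = (h * u).coeff j := by
  rw [Tmap_eq, HahnSeries.coeff_add, fracPart_coeff, polyPart_coeff, if_pos hj, if_pos hj,
    zero_add]

include hne hor in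
lemma order_Tmap {u : LaurentSeries Fq} (hu : u ≠ 0) (huo : u.order < 0) :
    Tmap Fq h u ≠ 0 ∧ (Tmap Fq h u).order = u.order + 1 := by
  have hmul : h * u ≠ 0 := mul_ne_zero hne hu
  have homul : (h * u).order = u.order + 1 := by
    rw [HahnSeries.order_mul hne hu, hor]; ring
  have hcoeff : (Tmap Fq h u).coeff (u.order + 1) ≠ 0 := by
    rw [Tmap_coeff_of_le hne hor u _ (by omega), ← homul]
    exact (HahnSeries.coeff_order_eq_zero.not.mpr hmul)
  have hzero : ∀ j : ℤ, j < u.order + 1 → (Tmap Fq h u).coeff j = 0 := by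
    intro j hj
    rw [Tmap_coeff_of_le hne hor u j (by omega)]
    exact HahnSeries.coeff_eq_zero_of_lt_order (by omega)
  have hT : Tmap Fq h u ≠ 0 := HahnSeries.ne_zero_of_coeff_ne_zero hcoeff
  refine ⟨hT, le_antisymm (HahnSeries.order_le_of_coeff_ne_zero hcoeff) ?_⟩
  by_contra hlt
  exact (HahnSeries.coeff_order_eq_zero.not.mpr hT) (hzero _ (by omega))

include hne hor in
lemma Tmap_of_order_zero {u : LaurentSeries Fq} (hu : u ≠ 0) (huo : u.order = 0) :
    Tmap Fq h u = fracPart Fq u := by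
  have homul : (h * u).order = 1 := by
    rw [HahnSeries.order_mul hne hu, hor, huo]
    ring
  apply HahnSeries.coeff_injective; funext j
  rw [fracPart_coeff]
  by_cases hj : j ≤ 0
  · rw [Tmap_coeff_of_le hne hor u j hj, if_pos hj]
    exact HahnSeries.coeff_eq_zero_of_lt_order (by omega)
  · rw [if_neg hj, Tmap_eq, HahnSeries.coeff_add, fracPart_coeff, polyPart_coeff,
      if_neg hj, if_neg hj, add_zero]

lemma order_inv {v : LaurentSeries Fq} (hv : v ≠ 0) : (v⁻¹).order = -v.order := by
  have h1 := HahnSeries.order_mul hv (inv_ne_zero hv)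
  rw [mul_inv_cancel₀ hv, HahnSeries.order_one] at h1
  omega

lemma fdeg_inv {v : LaurentSeries Fq} (hv : v ≠ 0) :
    fdeg Fq (v⁻¹) = ((v.order : ℤ) : WithBot ℤ) := by
  rw [fdeg, if_neg (inv_ne_zero hv), order_inv hv, neg_neg]

include hne hor in
lemma fareyAlg_inv_of_neg {v : LaurentSeries Fq} (hv : v ≠ 0) (hvo : v.order < 0)
    (hT : Tmap Fq h v ≠ 0) : fareyAlg Fq h (v⁻¹) = (Tmap Fq h v)⁻¹ := by
  have hdeg : fdeg Fq (v⁻¹) ≠ ((0 : ℤ) : WithBot ℤ) := by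
    rw [fdeg_inv hv]
    intro hcon
    rw [WithBot.coe_eq_coe] at hcon
    omega
  rw [fareyAlg, if_neg hdeg, inv_inv]
  have hTdef : Tmap Fq h v = v - polyPart Fq ((1 - h) * v) := rfl
  have key : ∀ P : LaurentSeries Fq, 1 - P * v⁻¹ = (v - P) * v⁻¹ := fun P => by
    rw [sub_mul, mul_inv_cancel₀ hv]
  rw [key, ← hTdef, div_eq_iff (mul_ne_zero hT (inv_ne_zero hv))]
  field_simp

include hne hor in
lemma fareyAlg_inv_of_zero {v : LaurentSeries Fq} (hv : v ≠ 0) (hvo : v.order = 0) :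
    fareyAlg Fq h (v⁻¹) = Tmap Fq h v := by
  have hdeg : fdeg Fq (v⁻¹) = ((0 : ℤ) : WithBot ℤ) := by
    rw [fdeg_inv hv, hvo]
  have hTdef : Tmap Fq h v = v - polyPart Fq ((1 - h) * v) := rfl
  have key : ∀ P : LaurentSeries Fq, (1 - P * v⁻¹) / v⁻¹ = v - P := fun P => by
    field_simp
  rw [fareyAlg, if_pos hdeg, inv_inv, key, ← hTdef]

end Main

/-- For `h ∈ 𝕃` with `deg h = -1` and `f ∈ 𝕃 ∖ 𝔽_q(t)` with
`deg f = -m` (`m ≥ 1`), the algebraic Farey map satisfies `F_h^{m+1}(f) = Ψ(f)`. -/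
theorem artin_is_acceleration_of_algebraic_farey
    (h : LaurentSeries Fq) (hhL : h ∈ setL Fq) (hh : fdeg Fq h = ((-1 : ℤ) : WithBot ℤ))
    (f : LaurentSeries Fq) (hf0 : f ≠ 0) (hfL : f ∈ setL Fq) (hfirr : f ∉ ratSet Fq)
    (m : ℕ) (hm : 1 ≤ m) (hdeg : fdeg Fq f = ((-(m : ℤ) : ℤ) : WithBot ℤ)) :
    (fareyAlg Fq h)^[m + 1] f = artin Fq f := by
  have hne : h ≠ 0 := by
    intro h0
    rw [fdeg, if_pos h0] at hh
    simp at hh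
  have hor : h.order = 1 := by
    rw [fdeg, if_neg hne, WithBot.coe_eq_coe] at hh
    omega
  have hfo : f.order = (m : ℤ) := by
    rw [fdeg, if_neg hf0, WithBot.coe_eq_coe] at hdeg
    omega
  have hio : (f⁻¹).order = -(m : ℤ) := by rw [order_inv hf0, hfo]
  have aux : ∀ k, k ≤ m → (Tmap Fq h)^[k] f⁻¹ ≠ 0 ∧
      ((Tmap Fq h)^[k] f⁻¹).order = -(m : ℤ) + k ∧
      (fareyAlg Fq h)^[k] f = ((Tmap Fq h)^[k] f⁻¹)⁻¹ := by
    intro k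
    induction k with
    | zero => exact fun _ => ⟨inv_ne_zero hf0, by simpa using hio, by simp [inv_inv]⟩
    | succ n ih =>
      intro hn1
      obtain ⟨hv, hvo, hiter⟩ := ih (by omega)
      have hvneg : ((Tmap Fq h)^[n] f⁻¹).order < 0 := by rw [hvo]; push_cast; omega
      obtain ⟨hT, hTo⟩ := order_Tmap hne hor hv hvneg
      refine ⟨by rwa [Function.iterate_succ_apply'], ?_, ?_⟩
      · rw [Function.iterate_succ_apply', hTo, hvo]; push_cast; ring
      · rw [Function.iterate_succ_apply', hiter, Function.iterate_succ_apply']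
        exact fareyAlg_inv_of_neg hne hor hv hvneg hT
  obtain ⟨hv, hvo, hiter⟩ := aux m le_rfl
  have hvo0 : ((Tmap Fq h)^[m] f⁻¹).order = 0 := by rw [hvo]; ring
  rw [Function.iterate_succ_apply', hiter, fareyAlg_inv_of_zero hne hor hv hvo0,
    Tmap_of_order_zero hne hor hv hvo0, fracPart_Tmap_iterate, artin]

end
end

section
/- Let f ∈ 𝕃 ∖ 𝔽_q(t), let k ≥ 0, and write A_{k+1} = a_m tᵐ + a_{m−1}t^{m−1} + ⋯ + a_0 with a_m ≠ 0 and m = deg A_{k+1}. Then for every i with 0 ≤ i ≤ deg A_{k+1}, |f − ((a_m tᵐ + ⋯ + a_{m−i}t^{m−i})·P_k + P_{k−1}) / ((a_m tᵐ + ⋯ + a_{m−i}t^{m−i})·Q_k + Q_{k−1})| ≤ q^{−i} / (|Q_k|·|Q_{k+1}|). -/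
/-!
Setting: `q` a prime power is formalized as `q = Fintype.card Fq` for a finite field `Fq`.
The field `K = 𝔽_q((t⁻¹))` of formal Laurent series in `t⁻¹` is realized as
`LaurentSeries Fq = 𝔽_q((X))` with `X = t⁻¹` (so `deg f = -(X-adic order of f)`).
-/

open scoped Classical
open MeasureTheory Filter
open scoped ENNReal

noncomputable section

variable (Fq : Type) [Field Fq] [Fintype Fq]

/-! ### Auxiliary lemmas -/

set_option linter.unusedSectionVars false

namespace GeomAux

variable {Fq : Type} [Field Fq] [Fintype Fq]

local notation "q" => (Fintype.card Fq : ℝ)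

lemma one_lt_q : 1 < (Fintype.card Fq : ℝ) := by
  exact_mod_cast Fintype.one_lt_card

lemma q_pos : 0 < (Fintype.card Fq : ℝ) := lt_trans one_pos one_lt_q

lemma zpow_le_zpow' {a b : ℤ} (h : a ≤ b) : (Fintype.card Fq : ℝ) ^ a ≤ q ^ b :=
  zpow_le_zpow_right₀ (le_of_lt one_lt_q) h

lemma zpow_lt_zpow' {a b : ℤ} (h : a < b) : (Fintype.card Fq : ℝ) ^ a < q ^ b :=
  zpow_lt_zpow_right₀ one_lt_q h

lemma le_order_of_forall {x : LaurentSeries Fq} {N : ℤ} (hx : x ≠ 0)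
    (h : ∀ j < N, x.coeff j = 0) : N ≤ x.order :=
  le_of_not_gt fun hc => HahnSeries.coeff_order_eq_zero.not.2 hx (h _ hc)

/-! #### fabs basics -/

lemma fabs_nonneg (g : LaurentSeries Fq) : 0 ≤ fabs Fq g := by
  unfold fabs; split
  · exact le_refl 0
  · positivity

lemma fabs_zero : fabs Fq 0 = 0 := if_pos rfl

lemma fabs_of_ne {g : LaurentSeries Fq} (hg : g ≠ 0) : fabs Fq g = q ^ (-g.order) :=
  if_neg hg

lemma fabs_pos {g : LaurentSeries Fq} (hg : g ≠ 0) : 0 < fabs Fq g := by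
  rw [fabs_of_ne hg]; positivity

lemma fabs_eq_zero {g : LaurentSeries Fq} (h : fabs Fq g = 0) : g = 0 := by
  by_contra hg; exact absurd h (ne_of_gt (fabs_pos hg))

lemma fabs_one : fabs Fq 1 = 1 := by
  rw [fabs_of_ne one_ne_zero, HahnSeries.order_one]; norm_num

lemma fabs_mul (g h : LaurentSeries Fq) : fabs Fq (g * h) = fabs Fq g * fabs Fq h := by
  by_cases hg : g = 0
  · simp [hg, fabs_zero]
  by_cases hh : h = 0
  · simp [hh, fabs_zero]
  rw [fabs_of_ne hg, fabs_of_ne hh, fabs_of_ne (mul_ne_zero hg hh),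
    HahnSeries.order_mul hg hh, neg_add, zpow_add₀ (ne_of_gt q_pos)]

lemma fabs_neg (g : LaurentSeries Fq) : fabs Fq (-g) = fabs Fq g := by
  by_cases hg : g = 0
  · simp [hg]
  · rw [fabs_of_ne (neg_ne_zero.2 hg), fabs_of_ne hg, HahnSeries.order_neg]

lemma fabs_inv (g : LaurentSeries Fq) : fabs Fq g⁻¹ = (fabs Fq g)⁻¹ := by
  by_cases hg : g = 0
  · simp [hg, fabs_zero]
  have hginv : g⁻¹ ≠ 0 := inv_ne_zero hg
  have horder : g.order + (g⁻¹).order = 0 := by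
    have := HahnSeries.order_mul hg hginv
    rw [mul_inv_cancel₀ hg, HahnSeries.order_one] at this
    omega
  rw [fabs_of_ne hg, fabs_of_ne hginv, ← zpow_neg]
  congr 1
  omega

lemma order_inv {g : LaurentSeries Fq} (hg : g ≠ 0) : (g⁻¹).order = -g.order := by
  have hginv : g⁻¹ ≠ 0 := inv_ne_zero hg
  have := HahnSeries.order_mul hg hginv
  rw [mul_inv_cancel₀ hg, HahnSeries.order_one] at this
  omega

lemma fabs_le_zpow {g : LaurentSeries Fq} {N : ℤ} (h : g ≠ 0 → N ≤ g.order) :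
    fabs Fq g ≤ q ^ (-N) := by
  by_cases hg : g = 0
  · rw [hg, fabs_zero]; positivity
  · rw [fabs_of_ne hg]; exact zpow_le_zpow' (neg_le_neg (h hg))

lemma fabs_le_zpow' {g : LaurentSeries Fq} {N : ℤ} (h : g ≠ 0 → N ≤ g.order) :
    fabs Fq g ≤ q ^ (-N) := fabs_le_zpow h

/-! #### ultrametric -/

lemma fabs_add_eq_left {g h : LaurentSeries Fq} (hlt : fabs Fq h < fabs Fq g) :
    fabs Fq (g + h) = fabs Fq g := by
  have hg : g ≠ 0 := by
    intro h0; rw [h0, fabs_zero] at hlt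
    exact absurd hlt (not_lt.2 (fabs_nonneg h))
  by_cases hh : h = 0
  · rw [hh, add_zero]
  have hord : g.order < h.order := by
    rw [fabs_of_ne hg, fabs_of_ne hh] at hlt
    have := (zpow_lt_zpow_iff_right₀ (one_lt_q (Fq := Fq))).1 hlt
    omega
  have hcoeff : (g + h).coeff g.order ≠ 0 := by
    rw [HahnSeries.coeff_add, HahnSeries.coeff_eq_zero_of_lt_order hord, add_zero]
    exact HahnSeries.coeff_order_eq_zero.not.2 hg
  have hne : g + h ≠ 0 := HahnSeries.ne_zero_of_coeff_ne_zero hcoeff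
  have h1 : (g + h).order ≤ g.order := HahnSeries.order_le_of_coeff_ne_zero hcoeff
  have h2 : g.order ≤ (g + h).order := by
    refine le_order_of_forall hne fun j hj => ?_
    rw [HahnSeries.coeff_add, HahnSeries.coeff_eq_zero_of_lt_order hj,
      HahnSeries.coeff_eq_zero_of_lt_order (lt_trans hj hord), add_zero]
  rw [fabs_of_ne hne, fabs_of_ne hg, le_antisymm h1 h2]

/-! #### cutoff, polyPart, fracPart coefficients -/

lemma cutoff_coeff (N : ℤ) (f : LaurentSeries Fq) (j : ℤ) :
    (cutoff Fq N f).coeff j = if j ≤ N then f.coeff j else 0 := rfl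

lemma polyPart_coeff (f : LaurentSeries Fq) (j : ℤ) :
    (polyPart Fq f).coeff j = if j ≤ 0 then f.coeff j else 0 := rfl

lemma fracPart_coeff (f : LaurentSeries Fq) (j : ℤ) :
    (fracPart Fq f).coeff j = if j ≤ 0 then 0 else f.coeff j := by
  rw [fracPart, HahnSeries.coeff_sub, polyPart_coeff]
  split <;> simp

lemma fabs_fracPart_lt_one (f : LaurentSeries Fq) : fabs Fq (fracPart Fq f) < 1 := by
  by_cases h0 : fracPart Fq f = 0
  · rw [h0, fabs_zero]; exact one_pos
  have h1 : (1 : ℤ) ≤ (fracPart Fq f).order := by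
    refine le_order_of_forall h0 fun j hj => ?_
    rw [fracPart_coeff, if_pos (by omega)]
  calc fabs Fq (fracPart Fq f) ≤ q ^ (-1 : ℤ) := fabs_le_zpow fun _ => h1
    _ < q ^ (0 : ℤ) := zpow_lt_zpow' (by omega)
    _ = 1 := zpow_zero _

lemma fracPart_coeff_le_zero (f : LaurentSeries Fq) {j : ℤ} (hj : j ≤ 0) :
    (fracPart Fq f).coeff j = 0 := by rw [fracPart_coeff, if_pos hj]

lemma setL_order {f : LaurentSeries Fq} (hf : f ∈ setL Fq) (h0 : f ≠ 0) :
    1 ≤ f.order := by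
  have := hf
  rw [setL, Set.mem_setOf_eq, fabs_of_ne h0] at this
  have h1 : q ^ (-f.order) < q ^ (0 : ℤ) := by rwa [zpow_zero]
  have := (zpow_lt_zpow_iff_right₀ (one_lt_q (Fq := Fq))).1 h1
  omega

/-! #### polyT and ratSet -/

lemma tvar_eq : tvar Fq = HahnSeries.single (-1 : ℤ) (1 : Fq) := by
  rw [tvar]
  exact inv_eq_of_mul_eq_one_right (by rw [HahnSeries.single_mul_single]; norm_num)

lemma tvar_pow (n : ℕ) : (tvar Fq) ^ n = HahnSeries.single (-(n : ℤ)) (1 : Fq) := by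
  induction n with
  | zero => simp
  | succ n ih =>
    rw [pow_succ, ih, tvar_eq, HahnSeries.single_mul_single, mul_one]
    congr 1
    push_cast
    ring_nf

lemma algebraMap_single (c : Fq) :
    algebraMap Fq (LaurentSeries Fq) c = HahnSeries.single (0 : ℤ) c := by
  rw [HahnSeries.algebraMap_apply',
    show algebraMap Fq (PowerSeries Fq) c = PowerSeries.C c from rfl,
    HahnSeries.ofPowerSeries_C, HahnSeries.C_apply]

lemma polyT_monomial (n : ℕ) (c : Fq) :
    polyT Fq (Polynomial.monomial n c) = HahnSeries.single (-(n : ℤ)) c := by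
  rw [polyT, Polynomial.aeval_monomial, tvar_pow, algebraMap_single,
    HahnSeries.single_mul_single, zero_add, mul_one]

lemma polyT_coeff (P : Polynomial Fq) (j : ℤ) :
    (polyT Fq P).coeff j = if j ≤ 0 then P.coeff (-j).toNat else 0 := by
  induction P using Polynomial.induction_on' with
  | add p r hp hr =>
    rw [polyT] at hp hr ⊢
    rw [map_add, HahnSeries.coeff_add, hp, hr, Polynomial.coeff_add]
    split <;> simp
  | monomial n c =>
    rw [polyT_monomial, HahnSeries.coeff_single, Polynomial.coeff_monomial]
    split_ifs with h1 h2 h3 <;> first | rfl | omega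

lemma polyT_ne_zero {P : Polynomial Fq} (hP : P ≠ 0) : polyT Fq P ≠ 0 := by
  intro h
  apply Polynomial.leadingCoeff_ne_zero.2 hP
  have := polyT_coeff P (-(P.natDegree : ℤ))
  rw [h, HahnSeries.coeff_zero, eq_comm, if_pos (by omega)] at this
  rw [Polynomial.leadingCoeff]
  simpa using this

lemma polyPart_eq_polyT (g : LaurentSeries Fq) : ∃ P, polyPart Fq g = polyT Fq P := by
  by_cases hg : g = 0
  · refine ⟨0, ?_⟩
    ext j
    rw [polyPart_coeff, polyT, map_zero]
    simp [hg]
  set M : ℕ := (-g.order).toNat + 1 with hM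
  have hkey : ∀ n : ℕ, M ≤ n → g.coeff (-(n : ℤ)) = 0 := by
    intro n hn
    apply HahnSeries.coeff_eq_zero_of_lt_order
    omega
  refine ⟨∑ n ∈ Finset.range M, Polynomial.monomial n (g.coeff (-(n : ℤ))), ?_⟩
  ext j
  rw [polyPart_coeff, polyT_coeff, Polynomial.finset_sum_coeff]
  simp only [Polynomial.coeff_monomial]
  rw [Finset.sum_ite_eq' (Finset.range M)]
  by_cases hj : j ≤ 0
  · rw [if_pos hj, if_pos hj]
    by_cases hjM : (-j).toNat ∈ Finset.range M
    · rw [if_pos hjM]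
      congr 1
      omega
    · rw [if_neg hjM, eq_comm]
      have h2 := hkey (-j).toNat (by simpa using hjM)
      rw [show -(((-j).toNat : ℕ) : ℤ) = j by omega] at h2
      exact h2.symm
  · rw [if_neg hj, if_neg hj]

lemma zero_mem_ratSet : (0 : LaurentSeries Fq) ∈ ratSet Fq :=
  ⟨0, 1, one_ne_zero, by rw [polyT, map_zero, zero_div]⟩

lemma ne_zero_of_not_mem {f : LaurentSeries Fq} (hf : f ∉ ratSet Fq) : f ≠ 0 :=
  fun h => hf (h ▸ zero_mem_ratSet)

lemma inv_mem_ratSet {g : LaurentSeries Fq} (hg : g ∈ ratSet Fq) : g⁻¹ ∈ ratSet Fq := by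
  obtain ⟨P, Q, hQ, rfl⟩ := hg
  by_cases hP : P = 0
  · rw [hP, polyT, map_zero, zero_div, inv_zero]
    exact zero_mem_ratSet
  · exact ⟨Q, P, hP, by rw [inv_div]⟩

lemma add_mem_ratSet {g h : LaurentSeries Fq} (hg : g ∈ ratSet Fq) (hh : h ∈ ratSet Fq) :
    g + h ∈ ratSet Fq := by
  obtain ⟨P1, Q1, hQ1, rfl⟩ := hg
  obtain ⟨P2, Q2, hQ2, rfl⟩ := hh
  refine ⟨P1 * Q2 + P2 * Q1, Q1 * Q2, mul_ne_zero hQ1 hQ2, ?_⟩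
  rw [div_add_div _ _ (polyT_ne_zero hQ1) (polyT_ne_zero hQ2)]
  rw [polyT, polyT, polyT, polyT, polyT, polyT, map_add, map_mul, map_mul, map_mul]
  ring

lemma polyPart_mem_ratSet (g : LaurentSeries Fq) : polyPart Fq g ∈ ratSet Fq := by
  obtain ⟨P, hP⟩ := polyPart_eq_polyT g
  exact ⟨P, 1, one_ne_zero, by rw [hP, polyT, polyT, map_one, div_one]⟩

lemma artin_not_mem {f : LaurentSeries Fq} (hf : f ∉ ratSet Fq) :
    artin Fq f ∉ ratSet Fq := by
  intro h
  apply hf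
  have h1 : f⁻¹ ∈ ratSet Fq := by
    have := add_mem_ratSet h (polyPart_mem_ratSet (Fq := Fq) f⁻¹)
    rwa [artin, fracPart, sub_add_cancel] at this
  have := inv_mem_ratSet h1
  rwa [inv_inv] at this

lemma iter_not_mem {f : LaurentSeries Fq} (hf : f ∉ ratSet Fq) (k : ℕ) :
    (artin Fq)^[k] f ∉ ratSet Fq := by
  induction k with
  | zero => exact hf
  | succ k ih => rw [Function.iterate_succ_apply']; exact artin_not_mem ih

lemma artin_mem_setL (f : LaurentSeries Fq) : artin Fq f ∈ setL Fq :=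
  fabs_fracPart_lt_one _

lemma iter_mem_setL {f : LaurentSeries Fq} (hf : f ∈ setL Fq) (k : ℕ) :
    (artin Fq)^[k] f ∈ setL Fq := by
  cases k with
  | zero => exact hf
  | succ k => rw [Function.iterate_succ_apply']; exact artin_mem_setL _

/-! #### pquot and convergents -/

lemma artin_eq (g : LaurentSeries Fq) :
    artin Fq g = g⁻¹ - polyPart Fq g⁻¹ := rfl

lemma pquot_succ (f : LaurentSeries Fq) (k : ℕ) :
    pquot Fq f (k + 1) = polyPart Fq (((artin Fq)^[k] f)⁻¹) := rfl

lemma inv_iter (f : LaurentSeries Fq) (k : ℕ) :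
    ((artin Fq)^[k] f)⁻¹ = pquot Fq f (k + 1) + (artin Fq)^[k + 1] f := by
  rw [Function.iterate_succ_apply', artin_eq, pquot_succ]
  ring

lemma polyPart_order {x : LaurentSeries Fq} (hx : x ≠ 0) (hord : x.order ≤ 0) :
    polyPart Fq x ≠ 0 ∧ (polyPart Fq x).order = x.order := by
  have hc : (polyPart Fq x).coeff x.order ≠ 0 := by
    rw [polyPart_coeff, if_pos hord]
    exact HahnSeries.coeff_order_eq_zero.not.2 hx
  have hne : polyPart Fq x ≠ 0 := HahnSeries.ne_zero_of_coeff_ne_zero hc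
  refine ⟨hne, le_antisymm (HahnSeries.order_le_of_coeff_ne_zero hc) ?_⟩
  refine le_order_of_forall hne fun j hj => ?_
  rw [polyPart_coeff]
  split
  · exact HahnSeries.coeff_eq_zero_of_lt_order hj
  · rfl

variable {f : LaurentSeries Fq}

lemma iter_ne_zero (hfirr : f ∉ ratSet Fq) (k : ℕ) : (artin Fq)^[k] f ≠ 0 :=
  ne_zero_of_not_mem (iter_not_mem hfirr k)

lemma iter_order (hfL : f ∈ setL Fq) (hfirr : f ∉ ratSet Fq) (k : ℕ) :
    1 ≤ ((artin Fq)^[k] f).order :=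
  setL_order (iter_mem_setL hfL k) (iter_ne_zero hfirr k)

lemma pquot_props (hfL : f ∈ setL Fq) (hfirr : f ∉ ratSet Fq) (k : ℕ) :
    pquot Fq f (k + 1) ≠ 0 ∧
      (pquot Fq f (k + 1)).order = -(((artin Fq)^[k] f).order) := by
  have h0 := iter_ne_zero hfirr k
  have h1 := iter_order hfL hfirr k
  have h2 : (((artin Fq)^[k] f)⁻¹).order = -((artin Fq)^[k] f).order := order_inv h0
  have := polyPart_order (x := ((artin Fq)^[k] f)⁻¹) (inv_ne_zero h0) (by omega)
  rw [pquot_succ]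
  exact ⟨this.1, by rw [this.2, h2]⟩

lemma fabs_pquot (hfL : f ∈ setL Fq) (hfirr : f ∉ ratSet Fq) (k : ℕ) :
    fabs Fq (pquot Fq f (k + 1)) = q ^ (((artin Fq)^[k] f).order) := by
  obtain ⟨h0, h1⟩ := pquot_props hfL hfirr k
  rw [fabs_of_ne h0, h1, neg_neg]

lemma one_lt_fabs_pquot (hfL : f ∈ setL Fq) (hfirr : f ∉ ratSet Fq) (k : ℕ) :
    1 < fabs Fq (pquot Fq f (k + 1)) := by
  rw [fabs_pquot hfL hfirr k]
  calc (1:ℝ) = q ^ (0:ℤ) := (zpow_zero _).symm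
    _ < q ^ (((artin Fq)^[k] f).order) := zpow_lt_zpow' (iter_order hfL hfirr k)

lemma Pc_zero : Pc Fq f 0 = 1 := rfl
lemma Pc_one : Pc Fq f 1 = 0 := rfl
lemma Qc_zero : Qc Fq f 0 = 0 := rfl
lemma Qc_one : Qc Fq f 1 = 1 := rfl

lemma Pc_succ (k : ℕ) :
    Pc Fq f (k + 2) = pquot Fq f (k + 1) * Pc Fq f (k + 1) + Pc Fq f k := rfl

lemma Qc_succ (k : ℕ) :
    Qc Fq f (k + 2) = pquot Fq f (k + 1) * Qc Fq f (k + 1) + Qc Fq f k := rfl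

lemma conv_identity (hfirr : f ∉ ratSet Fq) (k : ℕ) :
    f * (((artin Fq)^[k] f)⁻¹ * Qc Fq f (k + 1) + Qc Fq f k) =
      ((artin Fq)^[k] f)⁻¹ * Pc Fq f (k + 1) + Pc Fq f k := by
  induction k with
  | zero =>
    rw [Pc_zero, Pc_one, Qc_zero, Qc_one, Function.iterate_zero_apply]
    rw [add_zero, mul_one, mul_zero, zero_add, mul_inv_cancel₀ (ne_zero_of_not_mem hfirr)]
  | succ k ih =>
    have hg' : (artin Fq)^[k + 1] f ≠ 0 := iter_ne_zero hfirr (k + 1)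
    have hu : ((artin Fq)^[k+1] f) * ((artin Fq)^[k+1] f)⁻¹ = 1 := mul_inv_cancel₀ hg'
    rw [inv_iter] at ih
    apply mul_left_cancel₀ hg'
    rw [Pc_succ, Qc_succ]
    set u := (artin Fq)^[k+1] f
    set A := pquot Fq f (k + 1)
    set P1 := Pc Fq f (k + 1)
    set P0 := Pc Fq f k
    set Q1 := Qc Fq f (k + 1)
    set Q0 := Qc Fq f k
    linear_combination ih + (f * (A * Q1 + Q0 + u * Q1) - (A * P1 + P0 + u * P1) + u * (P1 - f * Q1)) * hu

lemma conv_det (k : ℕ) :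
    Pc Fq f (k + 1) * Qc Fq f k - Pc Fq f k * Qc Fq f (k + 1) = (-1) ^ (k + 1) := by
  induction k with
  | zero => rw [Pc_zero, Pc_one, Qc_zero, Qc_one]; ring
  | succ k ih => rw [Pc_succ, Qc_succ, pow_succ]; linear_combination (-1) * ih

lemma Q_growth (hfL : f ∈ setL Fq) (hfirr : f ∉ ratSet Fq) (k : ℕ) :
    Qc Fq f (k + 1) ≠ 0 ∧ fabs Fq (Qc Fq f k) < fabs Fq (Qc Fq f (k + 1)) := by
  induction k with
  | zero =>
    rw [Qc_zero, Qc_one, fabs_zero, fabs_one]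
    exact ⟨one_ne_zero, one_pos⟩
  | succ k ih =>
    obtain ⟨hQ1, hlt⟩ := ih
    have hA := one_lt_fabs_pquot hfL hfirr k
    have hQ1pos : 0 < fabs Fq (Qc Fq f (k + 1)) := fabs_pos hQ1
    have h2 : fabs Fq (Qc Fq f (k + 1)) <
        fabs Fq (pquot Fq f (k + 1) * Qc Fq f (k + 1)) := by
      rw [fabs_mul]
      nlinarith
    have h3 : fabs Fq (Qc Fq f k) <
        fabs Fq (pquot Fq f (k + 1) * Qc Fq f (k + 1)) := lt_trans hlt h2
    have h4 : fabs Fq (Qc Fq f (k + 2)) =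
        fabs Fq (pquot Fq f (k + 1) * Qc Fq f (k + 1)) := by
      rw [Qc_succ]
      exact fabs_add_eq_left h3
    constructor
    · intro h0
      rw [h0, fabs_zero] at h4
      exact absurd h4 (ne_of_lt (lt_trans hQ1pos h2))
    · rw [h4]; exact h2

lemma fabs_div (g h : LaurentSeries Fq) : fabs Fq (g / h) = fabs Fq g / fabs Fq h := by
  rw [div_eq_mul_inv, fabs_mul, fabs_inv, div_eq_mul_inv]

lemma fabs_neg_one_pow (n : ℕ) : fabs Fq ((-1 : LaurentSeries Fq) ^ n) = 1 := by
  induction n with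
  | zero => rw [pow_zero, fabs_one]
  | succ n ih =>
    rw [pow_succ, fabs_mul, ih, one_mul,
      show ((-1 : LaurentSeries Fq)) = -(1 : LaurentSeries Fq) from rfl, fabs_neg, fabs_one]

end GeomAux

/-- With `S = a_m tᵐ + ⋯ + a_{m-i} t^{m-i}` the truncation of `A_{k+1}`
(of degree `m`) to its top `i+1` terms (`0 ≤ i ≤ m`), one has
`|f - (S·P_k + P_{k-1})/(S·Q_k + Q_{k-1})| ≤ q^{-i}/(|Q_k|·|Q_{k+1}|)`. -/
theorem geom_intermediate_convergent_bound
    (f : LaurentSeries Fq) (hfL : f ∈ setL Fq) (hfirr : f ∉ ratSet Fq)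
    (k : ℕ) (m : ℕ) (hm : fdeg Fq (pquot Fq f (k + 1)) = ((m : ℤ) : WithBot ℤ))
    (i : ℕ) (hi : i ≤ m) :
    fabs Fq (f -
        (cutoff Fq ((i : ℤ) - (m : ℤ)) (pquot Fq f (k + 1)) * Pc Fq f (k + 1) + Pc Fq f k) /
        (cutoff Fq ((i : ℤ) - (m : ℤ)) (pquot Fq f (k + 1)) * Qc Fq f (k + 1) + Qc Fq f k))
      ≤ (Fintype.card Fq : ℝ) ^ (-(i : ℤ)) /
          (fabs Fq (Qc Fq f (k + 1)) * fabs Fq (Qc Fq f (k + 2))) := by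
  classical
  have hf0 : f ≠ 0 := GeomAux.ne_zero_of_not_mem hfirr
  set g : LaurentSeries Fq := (artin Fq)^[k] f with hg
  set g' : LaurentSeries Fq := (artin Fq)^[k + 1] f with hg'
  set A : LaurentSeries Fq := pquot Fq f (k + 1) with hA
  set S : LaurentSeries Fq := cutoff Fq ((i : ℤ) - (m : ℤ)) A with hS
  set P1 : LaurentSeries Fq := Pc Fq f (k + 1) with hP1
  set P0 : LaurentSeries Fq := Pc Fq f k with hP0
  set Q1 : LaurentSeries Fq := Qc Fq f (k + 1) with hQ1
  set Q0 : LaurentSeries Fq := Qc Fq f k with hQ0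
  obtain ⟨hA0, hAord⟩ := GeomAux.pquot_props hfL hfirr k
  rw [← hA] at hA0 hAord
  rw [← hg] at hAord
  -- extract m = g.order
  have hgord : g.order = (m : ℤ) := by
    rw [fdeg, if_neg hA0] at hm
    have : (-A.order : ℤ) = (m : ℤ) := by exact_mod_cast hm
    omega
  have hm1 : 1 ≤ (m : ℤ) := by
    have h := GeomAux.iter_order hfL hfirr k
    rw [← hg] at h
    omega
  have hAord' : A.order = -(m : ℤ) := by rw [hAord, hgord]
  have hgne : g ≠ 0 := GeomAux.iter_ne_zero hfirr k
  have hxord : (g⁻¹).order = -(m : ℤ) := by rw [GeomAux.order_inv hgne, hgord]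
  have hxne : g⁻¹ ≠ 0 := inv_ne_zero hgne
  -- S facts
  have hScoeff : S.coeff (-(m : ℤ)) = A.coeff (-(m : ℤ)) := by
    rw [hS, GeomAux.cutoff_coeff, if_pos (by omega)]
  have hSne : S ≠ 0 := by
    apply HahnSeries.ne_zero_of_coeff_ne_zero (g := -(m : ℤ))
    rw [hScoeff, ← hAord']
    exact HahnSeries.coeff_order_eq_zero.not.2 hA0
  have hSord : S.order = -(m : ℤ) := by
    refine le_antisymm (HahnSeries.order_le_of_coeff_ne_zero ?_)
      (GeomAux.le_order_of_forall hSne fun j hj => ?_)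
    · rw [hScoeff, ← hAord']; exact HahnSeries.coeff_order_eq_zero.not.2 hA0
    · rw [hS, GeomAux.cutoff_coeff]
      split
      · exact HahnSeries.coeff_eq_zero_of_lt_order (by omega)
      · rfl
  -- decomposition g⁻¹ = A + g'
  have hxdec : g⁻¹ = A + g' := GeomAux.inv_iter f k
  -- difference bound
  have hdiffbound : fabs Fq (g⁻¹ - S) ≤ (Fintype.card Fq : ℝ) ^ ((m : ℤ) - i - 1) := by
    have h1 : fabs Fq (g⁻¹ - S) ≤ (Fintype.card Fq : ℝ) ^ (-(((i : ℤ) - m) + 1)) := by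
      apply GeomAux.fabs_le_zpow
      intro hne0
      apply GeomAux.le_order_of_forall hne0
      intro j hj
      have hj' : j ≤ (i : ℤ) - m := by omega
      have hgc : g'.coeff j = 0 := by
        rw [hg', Function.iterate_succ_apply', ← hg]
        exact GeomAux.fracPart_coeff_le_zero _ (by omega)
      rw [HahnSeries.coeff_sub, hxdec, HahnSeries.coeff_add, hgc, add_zero,
        hS, GeomAux.cutoff_coeff, if_pos hj', sub_self]
    calc fabs Fq (g⁻¹ - S) ≤ (Fintype.card Fq : ℝ) ^ (-(((i : ℤ) - m) + 1)) := h1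
      _ = (Fintype.card Fq : ℝ) ^ ((m : ℤ) - i - 1) := by ring_nf
  -- Q facts
  obtain ⟨hQ1ne, hQ01⟩ := GeomAux.Q_growth hfL hfirr k
  rw [← hQ1] at hQ1ne
  rw [← hQ1, ← hQ0] at hQ01
  have hQ1pos : 0 < fabs Fq Q1 := GeomAux.fabs_pos hQ1ne
  have hqm1 : (1 : ℝ) ≤ (Fintype.card Fq : ℝ) ^ (m : ℤ) := by
    calc (1:ℝ) = (Fintype.card Fq : ℝ) ^ (0 : ℤ) := (zpow_zero _).symm
      _ ≤ _ := GeomAux.zpow_le_zpow' (by omega)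
  have hqmpos : (0:ℝ) < (Fintype.card Fq : ℝ) ^ (m : ℤ) := lt_of_lt_of_le one_pos hqm1
  -- |x| = |S| = |A| = q^m
  have hfabsx : fabs Fq g⁻¹ = (Fintype.card Fq : ℝ) ^ (m : ℤ) := by
    rw [GeomAux.fabs_of_ne hxne, hxord, neg_neg]
  have hfabsS : fabs Fq S = (Fintype.card Fq : ℝ) ^ (m : ℤ) := by
    rw [GeomAux.fabs_of_ne hSne, hSord, neg_neg]
  have hfabsA : fabs Fq A = (Fintype.card Fq : ℝ) ^ (m : ℤ) := by
    rw [GeomAux.fabs_of_ne hA0, hAord', neg_neg]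
  -- ultrametric denominators
  have hQ0lt : ∀ y : LaurentSeries Fq,
      fabs Fq y = (Fintype.card Fq : ℝ) ^ (m : ℤ) →
      fabs Fq (y * Q1 + Q0) = (Fintype.card Fq : ℝ) ^ (m : ℤ) * fabs Fq Q1 := by
    intro y hy
    have h1 : fabs Fq Q0 < fabs Fq (y * Q1) := by
      rw [GeomAux.fabs_mul, hy]
      calc fabs Fq Q0 < fabs Fq Q1 := hQ01
        _ = 1 * fabs Fq Q1 := (one_mul _).symm
        _ ≤ _ := by gcongr
    rw [GeomAux.fabs_add_eq_left h1, GeomAux.fabs_mul, hy]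
  have hD2 : fabs Fq (g⁻¹ * Q1 + Q0) = (Fintype.card Fq : ℝ) ^ (m : ℤ) * fabs Fq Q1 :=
    hQ0lt _ hfabsx
  have hD1 : fabs Fq (S * Q1 + Q0) = (Fintype.card Fq : ℝ) ^ (m : ℤ) * fabs Fq Q1 :=
    hQ0lt _ hfabsS
  have hQ2 : fabs Fq (Qc Fq f (k + 2)) = (Fintype.card Fq : ℝ) ^ (m : ℤ) * fabs Fq Q1 := by
    rw [GeomAux.Qc_succ, ← hA, ← hQ1, ← hQ0]
    exact hQ0lt _ hfabsA
  have hD2ne : g⁻¹ * Q1 + Q0 ≠ 0 := by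
    intro h0
    rw [h0, GeomAux.fabs_zero] at hD2
    exact absurd hD2.symm (ne_of_gt (mul_pos hqmpos hQ1pos))
  have hD1ne : S * Q1 + Q0 ≠ 0 := by
    intro h0
    rw [h0, GeomAux.fabs_zero] at hD1
    exact absurd hD1.symm (ne_of_gt (mul_pos hqmpos hQ1pos))
  -- main algebraic identity
  have hid : f * (g⁻¹ * Q1 + Q0) = g⁻¹ * P1 + P0 := GeomAux.conv_identity hfirr k
  have hdet : P1 * Q0 - P0 * Q1 = (-1 : LaurentSeries Fq) ^ (k + 1) :=
    GeomAux.conv_det k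
  have hNd : (S * P1 + P0) / (S * Q1 + Q0) * (S * Q1 + Q0) = S * P1 + P0 :=
    div_mul_cancel₀ _ hD1ne
  have heq : f - (S * P1 + P0) / (S * Q1 + Q0) =
      ((-1 : LaurentSeries Fq) ^ (k + 1) * (g⁻¹ - S)) /
        ((g⁻¹ * Q1 + Q0) * (S * Q1 + Q0)) := by
    rw [eq_div_iff (mul_ne_zero hD2ne hD1ne)]
    linear_combination (S * Q1 + Q0) * hid + (g⁻¹ - S) * hdet - (g⁻¹ * Q1 + Q0) * hNd
  have hrw : (Fintype.card Fq : ℝ) ^ (-(i : ℤ)) / (fabs Fq Q1 *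
      ((Fintype.card Fq : ℝ) ^ (m : ℤ) * fabs Fq Q1)) =
      ((Fintype.card Fq : ℝ) ^ (m : ℤ) * (Fintype.card Fq : ℝ) ^ (-(i : ℤ))) /
      ((Fintype.card Fq : ℝ) ^ (m : ℤ) * fabs Fq Q1 *
        ((Fintype.card Fq : ℝ) ^ (m : ℤ) * fabs Fq Q1)) := by
    rw [show (Fintype.card Fq : ℝ) ^ (m : ℤ) * fabs Fq Q1 *
        ((Fintype.card Fq : ℝ) ^ (m : ℤ) * fabs Fq Q1) =
        (Fintype.card Fq : ℝ) ^ (m : ℤ) * (fabs Fq Q1 *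
        ((Fintype.card Fq : ℝ) ^ (m : ℤ) * fabs Fq Q1)) from by ring]
    rw [mul_div_mul_left _ _ (ne_of_gt hqmpos)]
  rw [heq, GeomAux.fabs_div, GeomAux.fabs_mul, GeomAux.fabs_neg_one_pow, one_mul,
    GeomAux.fabs_mul, hD2, hD1, hQ2, hrw]
  have hDpos : (0:ℝ) < (Fintype.card Fq : ℝ) ^ (m : ℤ) * fabs Fq Q1 *
      ((Fintype.card Fq : ℝ) ^ (m : ℤ) * fabs Fq Q1) :=
    mul_pos (mul_pos hqmpos hQ1pos) (mul_pos hqmpos hQ1pos)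
  rw [div_le_div_iff_of_pos_right hDpos]
  calc fabs Fq (g⁻¹ - S) ≤ (Fintype.card Fq : ℝ) ^ ((m : ℤ) - i - 1) := hdiffbound
    _ ≤ (Fintype.card Fq : ℝ) ^ ((m : ℤ) + -(i : ℤ)) := GeomAux.zpow_le_zpow' (by omega)
    _ = (Fintype.card Fq : ℝ) ^ (m : ℤ) * (Fintype.card Fq : ℝ) ^ (-(i : ℤ)) :=
        zpow_add₀ (ne_of_gt GeomAux.q_pos) _ _


end
end
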